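/- For every real n > 0, the function s ↦ f_n(s) is differentiable on ℝ and its derivative satisfies, for every s ∈ ℝ, 2n · f_n′(s) = − I_{n+3}(s)/I_{n−1}(s) + (I_{n+1}(s)/I_{n−1}(s))². -/

import Mathlib

open MeasureTheory

/-- `I k s = ∫₀^∞ x^k e^{-x⁴/4 - s x²/2} dx`. -/
noncomputable def I (k s : ℝ) : ℝ :=
  ∫ x in Set.Ioi (0 : ℝ), x ^ k * Real.exp (-x ^ 4 / 4 - s * x ^ 2 / 2)

/-- The universal profile `f n s = I (n+1) s / (n · I (n-1) s)`. -/
noncomputable def f (n s : ℝ) : ℝ := I (n + 1) s / (n * I (n - 1) s)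

lemma exponent_bound (s x : ℝ) :
    -x ^ 4 / 4 - s * x ^ 2 / 2 ≤ s ^ 2 + -(1/8) * x ^ 4 := by
  nlinarith [sq_nonneg (x ^ 2 / 4 - s), sq_nonneg x, sq_nonneg (x^2)]

lemma I_integrable {k : ℝ} (hk : -1 < k) (s : ℝ) :
    IntegrableOn (fun x : ℝ => x ^ k * Real.exp (-x ^ 4 / 4 - s * x ^ 2 / 2))
      (Set.Ioi 0) := by
  have hbase : IntegrableOn (fun x : ℝ => x ^ k * Real.exp (-(1/8) * x ^ (4:ℝ)))
      (Set.Ioi 0) :=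
    integrableOn_rpow_mul_exp_neg_mul_rpow hk (by norm_num) (by norm_num)
  have hmaj : IntegrableOn
      (fun x : ℝ => Real.exp (s ^ 2) * (x ^ k * Real.exp (-(1/8) * x ^ (4:ℝ))))
      (Set.Ioi 0) := hbase.const_mul _
  refine hmaj.integrable.mono' ?_ ?_
  · apply Measurable.aestronglyMeasurable
    fun_prop
  · filter_upwards [ae_restrict_mem measurableSet_Ioi] with x hx
    have hx0 : (0:ℝ) < x := hx
    have h4 : x ^ (4:ℝ) = x ^ (4:ℕ) := by
      rw [show ((4:ℝ) = ((4:ℕ) : ℝ)) by norm_num, Real.rpow_natCast]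
    have hxk : (0:ℝ) ≤ x ^ k := Real.rpow_nonneg hx0.le _
    rw [Real.norm_eq_abs, abs_of_nonneg (mul_nonneg hxk (Real.exp_pos _).le)]
    rw [h4]
    have := exponent_bound s x
    calc x ^ k * Real.exp (-x ^ 4 / 4 - s * x ^ 2 / 2)
        ≤ x ^ k * Real.exp (s ^ 2 + -(1/8) * x ^ 4) := by
          exact mul_le_mul_of_nonneg_left (Real.exp_le_exp.2 this) hxk
      _ = Real.exp (s ^ 2) * (x ^ k * Real.exp (-(1/8) * x ^ 4)) := by
          rw [Real.exp_add]; ring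

lemma I_pos {k : ℝ} (hk : -1 < k) (s : ℝ) : 0 < I k s := by
  rw [I]
  refine (setIntegral_pos_iff_support_of_nonneg_ae ?_ (I_integrable hk s)).2 ?_
  · filter_upwards [ae_restrict_mem measurableSet_Ioi] with x hx
    exact mul_nonneg (Real.rpow_nonneg (le_of_lt hx) _) (Real.exp_pos _).le
  · have hsub : Set.Ioi (0:ℝ) ⊆ Function.support
        (fun x : ℝ => x ^ k * Real.exp (-x ^ 4 / 4 - s * x ^ 2 / 2)) := by
      intro x hx
      have hx0 : (0:ℝ) < x := hx
      exact ne_of_gt (mul_pos (Real.rpow_pos_of_pos hx0 _) (Real.exp_pos _))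
    rw [Set.inter_eq_right.2 hsub]
    simp [Real.volume_Ioi]

lemma I_hasDerivAt {k : ℝ} (hk : -1 < k) (s : ℝ) :
    HasDerivAt (fun t => I k t) (-(1/2) * I (k + 2) s) s := by
  have hk2 : (-1:ℝ) < k + 2 := by linarith
  set F : ℝ → ℝ → ℝ := fun t x => x ^ k * Real.exp (-x ^ 4 / 4 - t * x ^ 2 / 2)
  set F' : ℝ → ℝ → ℝ := fun t x =>
    x ^ k * (Real.exp (-x ^ 4 / 4 - t * x ^ 2 / 2) * (-(x ^ 2) / 2))
  have key := hasDerivAt_integral_of_dominated_loc_of_deriv_le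
    (μ := volume.restrict (Set.Ioi (0:ℝ))) (F := F) (F' := F')
    (bound := fun x => (1/2) * (x ^ (k+2) * Real.exp (-x ^ 4 / 4 - (-(|s|+1)) * x ^ 2 / 2)))
    (x₀ := s) (s := Metric.ball s 1) (Metric.ball_mem_nhds s one_pos)
    (Filter.Eventually.of_forall fun t => by
      apply Measurable.aestronglyMeasurable; fun_prop)
    ((I_integrable hk s))
    (by apply Measurable.aestronglyMeasurable; fun_prop)
    ?_ ?_ ?_
  · have : (∫ x in Set.Ioi (0:ℝ), F' s x) = -(1/2) * I (k + 2) s := by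
      rw [I, ← integral_const_mul]
      refine setIntegral_congr_fun measurableSet_Ioi fun x hx => ?_
      have hx0 : (0:ℝ) < x := hx
      have : x ^ (k + 2) = x ^ k * x ^ 2 := by
        rw [show x ^ (2:ℕ) = x ^ ((2:ℕ):ℝ) by rw [Real.rpow_natCast],
          ← Real.rpow_add hx0]
        norm_num
      simp only [F', this]
      ring
    have h2 := key.2
    rw [this] at h2
    exact h2
  · -- bound
    filter_upwards [ae_restrict_mem measurableSet_Ioi] with x hx t ht
    have hx0 : (0:ℝ) < x := hx
    have hts : t ∈ Set.Ioo (s - 1) (s + 1) := by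
      rcases Metric.mem_ball.1 ht with h
      rw [Real.dist_eq, abs_sub_lt_iff] at h
      constructor <;> linarith [h.1, h.2]
    have hxk2 : x ^ (k + 2) = x ^ k * x ^ 2 := by
      rw [show x ^ (2:ℕ) = x ^ ((2:ℕ):ℝ) by rw [Real.rpow_natCast],
        ← Real.rpow_add hx0]
      norm_num
    have hxk : (0:ℝ) ≤ x ^ k := Real.rpow_nonneg hx0.le _
    have hx2 : (0:ℝ) ≤ x ^ 2 := sq_nonneg x
    have hFe : F' t x = -(x ^ k * (Real.exp (-x ^ 4 / 4 - t * x ^ 2 / 2) * (x ^ 2 / 2))) := by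
      simp only [F']; ring
    have habs : ‖F' t x‖ = x ^ k * (Real.exp (-x ^ 4 / 4 - t * x ^ 2 / 2) * (x ^ 2 / 2)) := by
      rw [hFe, Real.norm_eq_abs, abs_neg, abs_of_nonneg]
      positivity
    rw [habs]
    have hexp : Real.exp (-x ^ 4 / 4 - t * x ^ 2 / 2)
        ≤ Real.exp (-x ^ 4 / 4 - (-(|s|+1)) * x ^ 2 / 2) := by
      apply Real.exp_le_exp.2
      have : -(|s|+1) ≤ t := by linarith [hts.1, neg_abs_le s]
      nlinarith
    rw [hxk2]
    nlinarith [mul_le_mul_of_nonneg_left hexp hxk, Real.exp_pos (-x ^ 4 / 4 - t * x ^ 2 / 2)]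
  · exact (I_integrable hk2 (-(|s|+1))).const_mul _
  · -- differentiability in t
    filter_upwards [ae_restrict_mem measurableSet_Ioi] with x hx t ht
    have h1 : HasDerivAt (fun t : ℝ => -x ^ 4 / 4 - t * x ^ 2 / 2) (-(x ^ 2) / 2) t := by
      have := ((hasDerivAt_id t).mul_const (x ^ 2 / 2)).const_sub (-x ^ 4 / 4)
      simpa [mul_comm, mul_div_assoc, neg_div] using this
    have h2 := (h1.exp).const_mul (x ^ k)
    simpa [F, F', mul_assoc] using h2

/-- The profile `f_n` is differentiable and
`2n f_n'(s) = -I_{n+3}(s)/I_{n-1}(s) + (I_{n+1}(s)/I_{n-1}(s))²`. -/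
theorem universal_profile_derivative (n : ℝ) (hn : 0 < n) :
    Differentiable ℝ (f n) ∧
    ∀ s : ℝ, 2 * n * deriv (f n) s =
      -(I (n + 3) s / I (n - 1) s) + (I (n + 1) s / I (n - 1) s) ^ 2 := by
  have h1 : (-1:ℝ) < n - 1 := by linarith
  have h2 : (-1:ℝ) < n + 1 := by linarith
  have hd : ∀ s : ℝ, HasDerivAt (f n)
      ((-(1/2) * I (n + 3) s * (n * I (n - 1) s) -
        I (n + 1) s * (n * (-(1/2) * I (n + 1) s))) / (n * I (n - 1) s) ^ 2) s := by
    intro s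
    have hA : HasDerivAt (fun t => I (n + 1) t) (-(1/2) * I (n + 1 + 2) s) s :=
      I_hasDerivAt h2 s
    have hB : HasDerivAt (fun t => n * I (n - 1) t) (n * (-(1/2) * I (n - 1 + 2) s)) s :=
      (I_hasDerivAt h1 s).const_mul n
    have hne : n * I (n - 1) s ≠ 0 :=
      ne_of_gt (mul_pos hn (I_pos h1 s))
    have := hA.div hB hne
    have e1 : n + 1 + 2 = n + 3 := by ring
    have e2 : n - 1 + 2 = n + 1 := by ring
    rw [e1] at this
    rw [e2] at this
    exact this
  constructor
  · intro s
    exact (hd s).differentiableAt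
  · intro s
    rw [(hd s).deriv]
    have hne : I (n - 1) s ≠ 0 := ne_of_gt (I_pos h1 s)
    have hnne : n ≠ 0 := ne_of_gt hn
    field_simp
    ring
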